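/- arXiv:2406.08892 — 6 statements merged into one kernel-verified Lean document; each statement's English description precedes it below -/
import Mathlib

section
/- The function ψ(ζ) = (ζ(1+√(1−ζ)))^{1/3} + (ζ(1−√(1−ζ)))^{1/3} is monotonically increasing on the interval (0, 1/9). -/
noncomputable def psi (z : ℝ) : ℝ :=
  (z * (1 + Real.sqrt (1 - z))) ^ ((1:ℝ)/3) + (z * (1 - Real.sqrt (1 - z))) ^ ((1:ℝ)/3)

theorem psi_monotone : MonotoneOn psi (Set.Ioo (0:ℝ) (1/9)) := by
  rintro x ⟨hx0, hx1⟩ y ⟨hy0, hy1⟩ hxy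
  unfold psi
  have hsx := Real.sq_sqrt (by linarith : (0:ℝ) ≤ 1 - x)
  have hsy := Real.sq_sqrt (by linarith : (0:ℝ) ≤ 1 - y)
  have hsx0 := Real.sqrt_nonneg (1 - x)
  have hsy0 := Real.sqrt_nonneg (1 - y)
  have hsx1 : Real.sqrt (1 - x) ≤ 1 := Real.sqrt_le_one.mpr (by linarith)
  have hsy1 : Real.sqrt (1 - y) ≤ 1 := Real.sqrt_le_one.mpr (by linarith)
  set sx := Real.sqrt (1 - x)
  set sy := Real.sqrt (1 - y)
  have hmul : x * sx ≤ y * sy := by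
    have hsq : (x * sx) ^ 2 ≤ (y * sy) ^ 2 := by
      have e1 : (x * sx) ^ 2 = x ^ 2 * (1 - x) := by rw [mul_pow, hsx]
      have e2 : (y * sy) ^ 2 = y ^ 2 * (1 - y) := by rw [mul_pow, hsy]
      rw [e1, e2]
      nlinarith [mul_nonneg (sub_nonneg.2 hxy) (mul_pos hx0 hy0).le,
        mul_nonneg (sub_nonneg.2 hxy) (sq_nonneg x), mul_nonneg (sub_nonneg.2 hxy) (sq_nonneg y)]
    exact le_of_pow_le_pow_left₀ two_ne_zero (mul_nonneg hy0.le hsy0) hsq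
  have h1 : x * (1 + sx) ≤ y * (1 + sy) := by nlinarith
  have h2 : x * (1 - sx) ≤ y * (1 - sy) := by
    have hss : sy ≤ sx := Real.sqrt_le_sqrt (by linarith)
    nlinarith
  have n1 : 0 ≤ x * (1 + sx) := by nlinarith
  have n2 : 0 ≤ x * (1 - sx) := by nlinarith
  gcongr
end

section
/- Let F(x) = −x − γ₂ x²/2 + γ₄ x⁴/24 where γ₂ > 0, γ₄ > 0, and 9γ₄ > 8γ₂³. Set ζ = 8γ₂³/(9γ₄) and Z = √(1−ζ). Then the unique positive critical point of F is x* = (3ζ^{1/3}/(2γ₂))((1+Z)^{1/3} + (1−Z)^{1/3}), and the minimum of F over x ≥ 0 equals −(9/(16γ₂))(2ψ(ζ) + ψ(ζ)²), where ψ(ζ) = ζ^{1/3}((1+Z)^{1/3} + (1−Z)^{1/3}). -/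
set_option maxHeartbeats 1600000 in
theorem cardano_min (γ₂ γ₄ : ℝ) (h2 : 0 < γ₂) (h4 : 0 < γ₄) (hd : 8 * γ₂^3 < 9 * γ₄) :
    let F : ℝ → ℝ := fun x => -x - γ₂ * x^2 / 2 + γ₄ * x^4 / 24
    let ζ : ℝ := 8 * γ₂^3 / (9 * γ₄)
    let Z : ℝ := Real.sqrt (1 - ζ)
    let ψ : ℝ := ζ ^ ((1:ℝ)/3) * ((1 + Z) ^ ((1:ℝ)/3) + (1 - Z) ^ ((1:ℝ)/3))
    let xstar : ℝ := (3 * ζ ^ ((1:ℝ)/3) / (2 * γ₂)) * ((1 + Z) ^ ((1:ℝ)/3) + (1 - Z) ^ ((1:ℝ)/3))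
    0 < xstar ∧ deriv F xstar = 0 ∧ (∀ x : ℝ, 0 < x → deriv F x = 0 → x = xstar) ∧
    IsMinOn F (Set.Ici (0:ℝ)) xstar ∧
    F xstar = -(9 / (16 * γ₂)) * (2 * ψ + ψ^2) := by
  intro F ζ Z ψ xstar
  have h9 : (0:ℝ) < 9 * γ₄ := by linarith
  have hζpos : 0 < ζ := by
    simp only [ζ]; positivity
  have hζlt : ζ < 1 := by
    simp only [ζ]
    rw [div_lt_one h9]; linarith
  have h1ζ : (0:ℝ) ≤ 1 - ζ := by linarith
  have hZ0 : 0 ≤ Z := Real.sqrt_nonneg _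
  have hZsq : Z ^ 2 = 1 - ζ := Real.sq_sqrt h1ζ
  have hZlt : Z < 1 := by nlinarith [hZsq]
  have h1pZ : (0:ℝ) < 1 + Z := by linarith
  have h1mZ : (0:ℝ) < 1 - Z := by linarith
  -- the cube root quantities
  set c : ℝ := (1:ℝ)/3 with hc
  set a : ℝ := ζ ^ c * (1 + Z) ^ c with haa
  set b : ℝ := ζ ^ c * (1 - Z) ^ c with hbb
  have cube : ∀ t : ℝ, 0 ≤ t → (t ^ c) ^ 3 = t := by
    intro t ht
    rw [← Real.rpow_natCast (t ^ c) 3, ← Real.rpow_mul ht]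
    norm_num [hc]
  have ha3 : a ^ 3 = ζ * (1 + Z) := by
    rw [haa, ← Real.mul_rpow hζpos.le h1pZ.le, cube _ (by positivity)]
  have hb3 : b ^ 3 = ζ * (1 - Z) := by
    rw [hbb, ← Real.mul_rpow hζpos.le h1mZ.le, cube _ (by positivity)]
  have hab : a * b = ζ := by
    have key : a * b = ((ζ * (1 + Z)) * (ζ * (1 - Z))) ^ c := by
      rw [haa, hbb, Real.mul_rpow (mul_nonneg hζpos.le h1pZ.le) (mul_nonneg hζpos.le h1mZ.le),
        Real.mul_rpow hζpos.le h1pZ.le, Real.mul_rpow hζpos.le h1mZ.le]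
    rw [key]
    have h12 : (1 + Z) * (1 - Z) = ζ := by linear_combination -hZsq
    have h1 : (ζ * (1 + Z)) * (ζ * (1 - Z)) = ζ ^ 3 := by linear_combination ζ ^ 2 * h12
    rw [h1, ← Real.rpow_natCast ζ 3, ← Real.rpow_mul hζpos.le]
    norm_num [hc]
  have hψab : ψ = a + b := by simp only [ψ, haa, hbb]; ring
  have hψ3 : ψ ^ 3 = 2 * ζ + 3 * ζ * ψ := by
    rw [hψab]
    linear_combination ha3 + hb3 + (3 * (a + b)) * hab
  have hapos : 0 < a := by rw [haa]; positivity
  have hbpos : 0 < b := by rw [hbb]; positivity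
  have hψpos : 0 < ψ := by rw [hψab]; linarith
  have hx : xstar = 3 * ψ / (2 * γ₂) := by
    simp only [xstar, ψ]; ring
  have hxpos : 0 < xstar := by rw [hx]; positivity
  clear_value a b ψ xstar
  have hB : 9 * γ₄ * ζ = 8 * γ₂ ^ 3 := by
    simp only [ζ]; field_simp
  -- the cubic equation for xstar
  have hr : γ₄ * xstar ^ 3 = 6 + 6 * γ₂ * xstar := by
    rw [hx]
    field_simp
    linear_combination (27 * γ₄) * hψ3 + (3 * (2 + 3 * ψ)) * hB
  -- derivative
  have hF' : ∀ x : ℝ, HasDerivAt F (-1 - γ₂ * x + γ₄ * x ^ 3 / 6) x := by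
    intro x
    have h : HasDerivAt (fun x : ℝ => -x - γ₂ * x ^ 2 / 2 + γ₄ * x ^ 4 / 24)
        (-1 - γ₂ * (2 * x ^ 1) / 2 + γ₄ * (4 * x ^ 3) / 24) x := by
      exact (((hasDerivAt_id x).neg.sub
        (((hasDerivAt_pow 2 x).const_mul γ₂).div_const 2)).add
        (((hasDerivAt_pow 4 x).const_mul γ₄).div_const 24))
    convert h using 1
    ring
  have hderiv : ∀ x : ℝ, deriv F x = -1 - γ₂ * x + γ₄ * x ^ 3 / 6 := fun x => (hF' x).deriv
  have hFval : ∀ x : ℝ, F x = -x - γ₂ * x ^ 2 / 2 + γ₄ * x ^ 4 / 24 := fun x => rfl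
  clear_value F
  refine ⟨hxpos, ?_, ?_, ?_, ?_⟩
  · rw [hderiv]
    linear_combination hr / 6
  · intro x hxp hdx
    rw [hderiv] at hdx
    have hcx : γ₄ * x ^ 3 = 6 + 6 * γ₂ * x := by linarith
    have h6 : 6 * γ₂ < γ₄ * x ^ 2 := by nlinarith [hcx, hxp]
    have key : (x - xstar) * (γ₄ * (x ^ 2 + x * xstar + xstar ^ 2) - 6 * γ₂) = 0 := by
      linear_combination hcx - hr
    rcases mul_eq_zero.1 key with h | h
    · linarith [sub_eq_zero.1 h]
    · nlinarith [h6, mul_pos hxp hxpos, sq_nonneg xstar]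
  · rw [isMinOn_iff]
    intro y hy
    simp only [Set.mem_Ici] at hy
    have hid : 24 * γ₄ * (F y - F xstar) =
        γ₄ * (y - xstar) ^ 2 * (γ₄ * (y ^ 2 + 2 * xstar * y + 3 * xstar ^ 2) - 12 * γ₂) := by
      rw [hFval, hFval]
      linear_combination (4 * γ₄ * (y - xstar)) * hr
    have h6 : 6 * γ₂ < γ₄ * xstar ^ 2 := by nlinarith [hr, hxpos]
    have hfac : 0 ≤ γ₄ * (y ^ 2 + 2 * xstar * y + 3 * xstar ^ 2) - 12 * γ₂ := by
      nlinarith [sq_nonneg y, mul_nonneg hy hxpos.le, h6]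
    nlinarith [mul_nonneg (mul_nonneg h4.le (sq_nonneg (y - xstar))) hfac]
  · rw [hFval, hx]
    field_simp
    linear_combination (1296 * γ₄) * hψ3 + (144 * (2 + 3 * ψ)) * hB
end

section
/- Let 1 ≤ ℓ ≤ m−1 be integers with m ≥ 2, and let f(x) = −Σ_{i=1}^{ℓ} αᵢ xⁱ + Σ_{i=ℓ+1}^{m} αᵢ xⁱ, where all αᵢ ≥ 0, α₁ > 0, α_ℓ > 0, and α_m > 0. Then f has a unique local extremum on (0,∞), which is a minimum: there exists a unique x₁ > 0 with f'(x₁) = 0, f' < 0 on (0,x₁), and f' > 0 on (x₁,∞). -/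
open Finset Set

theorem unique_minimum (m ℓ : ℕ) (hm : 2 ≤ m) (hℓ1 : 1 ≤ ℓ) (hℓm : ℓ ≤ m - 1)
    (α : ℕ → ℝ) (hα : ∀ i, 0 ≤ α i) (h1 : 0 < α 1) (hℓ : 0 < α ℓ) (hαm : 0 < α m) :
    let f : ℝ → ℝ := fun x =>
      -(∑ i ∈ Finset.Icc 1 ℓ, α i * x ^ i) + ∑ i ∈ Finset.Icc (ℓ+1) m, α i * x ^ i
    ∃ x₁ : ℝ, 0 < x₁ ∧ deriv f x₁ = 0 ∧
      (∀ x : ℝ, 0 < x → x < x₁ → deriv f x < 0) ∧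
      (∀ x : ℝ, x₁ < x → 0 < deriv f x) ∧
      (∀ x : ℝ, 0 < x → deriv f x = 0 → x = x₁) := by
  intro f
  have hℓm' : ℓ + 1 ≤ m := by omega
  set P : ℝ → ℝ := fun x => ∑ i ∈ Finset.Icc (ℓ+1) m, α i * i * x ^ (i-ℓ) with hP
  set N : ℝ → ℝ := fun x => ∑ i ∈ Finset.Icc 1 ℓ, α i * i / x ^ (ℓ-i) with hN
  set g : ℝ → ℝ := fun x => P x - N x with hg
  -- derivative formula
  have hderiv : ∀ x : ℝ, deriv f x =
      -(∑ i ∈ Finset.Icc 1 ℓ, α i * (i * x ^ (i-1))) +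
       ∑ i ∈ Finset.Icc (ℓ+1) m, α i * (i * x ^ (i-1)) := by
    intro x
    have d1 : HasDerivAt (fun x : ℝ => ∑ i ∈ Finset.Icc 1 ℓ, α i * x ^ i)
        (∑ i ∈ Finset.Icc 1 ℓ, α i * (i * x ^ (i-1))) x :=
      HasDerivAt.fun_sum fun i _ => (hasDerivAt_pow i x).const_mul (α i)
    have d2 : HasDerivAt (fun x : ℝ => ∑ i ∈ Finset.Icc (ℓ+1) m, α i * x ^ i)
        (∑ i ∈ Finset.Icc (ℓ+1) m, α i * (i * x ^ (i-1))) x :=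
      HasDerivAt.fun_sum fun i _ => (hasDerivAt_pow i x).const_mul (α i)
    exact (d1.neg.add d2).deriv
  -- key factorization
  have key : ∀ x : ℝ, 0 < x → deriv f x = x ^ (ℓ-1) * g x := by
    intro x hx
    have hxne : x ≠ 0 := hx.ne'
    have e1 : x ^ (ℓ-1) * P x = ∑ i ∈ Finset.Icc (ℓ+1) m, α i * (i * x ^ (i-1)) := by
      rw [hP, Finset.mul_sum]
      refine Finset.sum_congr rfl fun i hi => ?_
      simp only [Finset.mem_Icc] at hi
      have h : (ℓ-1) + (i-ℓ) = i - 1 := by omega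
      rw [show x ^ (ℓ-1) * (α i * ↑i * x ^ (i - ℓ)) = α i * (↑i * (x ^ (ℓ-1) * x ^ (i-ℓ))) by ring,
        ← pow_add, h]
    have e2 : x ^ (ℓ-1) * N x = ∑ i ∈ Finset.Icc 1 ℓ, α i * (i * x ^ (i-1)) := by
      rw [hN, Finset.mul_sum]
      refine Finset.sum_congr rfl fun i hi => ?_
      simp only [Finset.mem_Icc] at hi
      have hpow : x ^ (i-1) * x ^ (ℓ-i) = x ^ (ℓ-1) := by
        rw [← pow_add]; congr 1; omega
      field_simp
      rw [← hpow]; ring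
    rw [hderiv, hg, mul_sub, e1, e2]; ring
  -- strict monotonicity
  have hmono : ∀ x y : ℝ, 0 < x → x < y → g x < g y := by
    intro x y hx hxy
    have hy : 0 < y := hx.trans hxy
    have hNle : N y ≤ N x := by
      rw [hN]
      refine Finset.sum_le_sum fun i hi => ?_
      exact div_le_div_of_nonneg_left (mul_nonneg (hα i) (Nat.cast_nonneg i)) (pow_pos hx _)
        (pow_le_pow_left₀ hx.le hxy.le _)
    have hPlt : P x < P y := by
      rw [hP]; dsimp only
      have hmem : m ∈ Finset.Icc (ℓ+1) m := by simp [hℓm']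
      rw [← Finset.sum_erase_add _ _ hmem, ← Finset.sum_erase_add _ _ hmem]
      have hrest : ∑ i ∈ (Finset.Icc (ℓ+1) m).erase m, α i * i * x ^ (i-ℓ)
          ≤ ∑ i ∈ (Finset.Icc (ℓ+1) m).erase m, α i * i * y ^ (i-ℓ) := by
        refine Finset.sum_le_sum fun i hi => ?_
        have : x ^ (i-ℓ) ≤ y ^ (i-ℓ) := pow_le_pow_left₀ hx.le hxy.le _
        have h0 : (0:ℝ) ≤ α i * i := mul_nonneg (hα i) (Nat.cast_nonneg i)
        exact mul_le_mul_of_nonneg_left this h0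
      have htop : α m * m * x ^ (m-ℓ) < α m * m * y ^ (m-ℓ) := by
        have hp : x ^ (m-ℓ) < y ^ (m-ℓ) := pow_lt_pow_left₀ hxy hx.le (by omega)
        have : (0:ℝ) < α m * m := by positivity
        exact (mul_lt_mul_iff_right₀ this).2 hp
      linarith
    rw [hg]; dsimp only; linarith
  -- continuity
  have hcont : ContinuousOn g (Set.Ioi (0:ℝ)) := by
    rw [hg]
    apply ContinuousOn.sub
    · rw [hP]
      apply continuousOn_finset_sum
      intro i _
      exact (continuous_const.mul (continuous_pow _)).continuousOn
    · rw [hN]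
      apply continuousOn_finset_sum
      intro i _
      exact ContinuousOn.div continuousOn_const ((continuous_pow _).continuousOn)
        fun x hx => pow_ne_zero _ (ne_of_gt hx)
  -- lower bound for N
  have hNlb : ∀ x : ℝ, 0 < x → α ℓ * ℓ ≤ N x := by
    intro x hx
    rw [hN]
    have hmem : ℓ ∈ Finset.Icc 1 ℓ := by simp [hℓ1]
    have hs := Finset.single_le_sum (f := fun i => α i * i / x ^ (ℓ-i))
      (fun i _ => div_nonneg (mul_nonneg (hα i) (Nat.cast_nonneg i)) (pow_pos hx _).le) hmem
    simpa using hs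
  set C : ℝ := ∑ i ∈ Finset.Icc (ℓ+1) m, α i * i with hC
  have hC0 : 0 ≤ C := Finset.sum_nonneg fun i _ => mul_nonneg (hα i) (Nat.cast_nonneg i)
  have hPub : ∀ x : ℝ, 0 < x → x ≤ 1 → P x ≤ C * x := by
    intro x hx hx1
    rw [hP, hC, Finset.sum_mul]
    refine Finset.sum_le_sum fun i hi => ?_
    simp only [Finset.mem_Icc] at hi
    have hp : x ^ (i-ℓ) ≤ x ^ 1 := pow_le_pow_of_le_one hx.le hx1 (by omega)
    calc α i * i * x ^ (i-ℓ) ≤ α i * i * x ^ 1 :=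
          mul_le_mul_of_nonneg_left hp (mul_nonneg (hα i) (Nat.cast_nonneg i))
      _ = α i * i * x := by ring
  -- choose a with g a < 0
  set εd : ℝ := α ℓ * ℓ with hεd
  have hεd0 : 0 < εd := by
    have : (0:ℝ) < (ℓ:ℝ) := by exact_mod_cast hℓ1
    positivity
  set a : ℝ := min 1 (εd / (2*(C+1))) with ha
  have ha0 : 0 < a := lt_min one_pos (by positivity)
  have ha1 : a ≤ 1 := min_le_left _ _
  have hga : g a < 0 := by
    have h1' : P a ≤ C * a := hPub a ha0 ha1
    have h2' : εd ≤ N a := hNlb a ha0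
    have h3' : a ≤ εd / (2*(C+1)) := min_le_right _ _
    have h4' : C * a ≤ C * (εd / (2*(C+1))) := mul_le_mul_of_nonneg_left h3' hC0
    have h5' : C * (εd / (2*(C+1))) < εd := by
      rw [mul_div_assoc']
      rw [div_lt_iff₀ (by linarith)]
      nlinarith
    rw [hg]; dsimp only; linarith
  -- choose b with g b > 0
  set D : ℝ := ∑ i ∈ Finset.Icc 1 ℓ, α i * i with hD
  have hD0 : 0 ≤ D := Finset.sum_nonneg fun i _ => mul_nonneg (hα i) (Nat.cast_nonneg i)
  have hNub : ∀ x : ℝ, 1 ≤ x → N x ≤ D := by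
    intro x hx1
    rw [hN, hD]
    refine Finset.sum_le_sum fun i hi => ?_
    exact div_le_self (mul_nonneg (hα i) (Nat.cast_nonneg i)) (one_le_pow₀ hx1)
  have hPlb : ∀ x : ℝ, 1 ≤ x → α m * m * x ≤ P x := by
    intro x hx1
    have hx0 : (0:ℝ) < x := lt_of_lt_of_le one_pos hx1
    rw [hP]
    have hmem : m ∈ Finset.Icc (ℓ+1) m := by simp [hℓm']
    have hs := Finset.single_le_sum (f := fun i => α i * i * x ^ (i-ℓ))
      (fun i _ => mul_nonneg (mul_nonneg (hα i) (Nat.cast_nonneg i)) (pow_pos hx0 _).le) hmem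
    have hp : x ^ 1 ≤ x ^ (m-ℓ) := pow_le_pow_right₀ hx1 (by omega)
    rw [pow_one] at hp
    have h6' : α m * m * x ≤ α m * m * x ^ (m-ℓ) :=
      mul_le_mul_of_nonneg_left hp (mul_nonneg (hα m) (Nat.cast_nonneg m))
    exact h6'.trans hs
  have hm0 : (0:ℝ) < α m * m := by
    have : (0:ℝ) < (m:ℝ) := by exact_mod_cast (by omega : 0 < m)
    positivity
  set b : ℝ := max 1 ((D+1) / (α m * m)) with hb
  have hb1 : 1 ≤ b := le_max_left _ _
  have hgb : 0 < g b := by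
    have h1' : α m * m * b ≤ P b := hPlb b hb1
    have h2' : N b ≤ D := hNub b hb1
    have h3' : (D+1) / (α m * m) ≤ b := le_max_right _ _
    have h4' : D + 1 ≤ b * (α m * m) := (div_le_iff₀ hm0).mp h3'
    rw [hg]; dsimp only; nlinarith
  have hab : a ≤ b := ha1.trans hb1
  -- IVT
  have hsub : Set.Icc a b ⊆ Set.Ioi (0:ℝ) := fun z hz => lt_of_lt_of_le ha0 hz.1
  have hivt := intermediate_value_Ioo hab (hcont.mono hsub)
  have h0mem : (0:ℝ) ∈ Set.Ioo (g a) (g b) := ⟨hga, hgb⟩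
  obtain ⟨x₁, hx₁mem, hgx₁⟩ := hivt h0mem
  have hx₁pos : 0 < x₁ := lt_trans ha0 hx₁mem.1
  refine ⟨x₁, hx₁pos, ?_, ?_, ?_, ?_⟩
  · rw [key x₁ hx₁pos, hgx₁, mul_zero]
  · intro x hx hxx₁
    rw [key x hx]
    have hgx : g x < 0 := by
      have := hmono x x₁ hx hxx₁; rw [hgx₁] at this; exact this
    exact mul_neg_of_pos_of_neg (pow_pos hx _) hgx
  · intro x hx₁x
    have hx : 0 < x := hx₁pos.trans hx₁x
    rw [key x hx]
    have hgx : 0 < g x := by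
      have := hmono x₁ x hx₁pos hx₁x; rw [hgx₁] at this; exact this
    exact mul_pos (pow_pos hx _) hgx
  · intro x hx hdx
    rw [key x hx] at hdx
    have hgx : g x = 0 := by
      rcases mul_eq_zero.mp hdx with h | h
      · exact absurd h (pow_ne_zero _ hx.ne')
      · exact h
    rcases lt_trichotomy x x₁ with h | h | h
    · have := hmono x x₁ hx h; rw [hgx, hgx₁] at this; exact absurd this (lt_irrefl 0)
    · exact h
    · have := hmono x₁ x hx₁pos h; rw [hgx, hgx₁] at this; exact absurd this (lt_irrefl 0)
end

section
/- For 0 < b < 1, q > 0, j ∈ {0,1}, and w ≥ 0: w · ∫₀¹ κ^{q+j}(1−κ)^{b−1} exp(w(1−κ)) dκ = (q+j) · B(q+j, b) · [M(b, b+q+j, w) − M(b−1, b+q+j, w)]. -/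
/-- Kummer's confluent hypergeometric function `M(a, c, w)`. -/
noncomputable def kummerM (a c w : ℝ) : ℝ :=
  ∑' i : ℕ, ((ascPochhammer ℝ i).eval a / (ascPochhammer ℝ i).eval c) * w ^ i / (Nat.factorial i)

/-- The Beta function as an integral. -/
noncomputable def betaFn (x y : ℝ) : ℝ :=
  ∫ t in (0:ℝ)..1, t ^ (x - 1) * (1 - t) ^ (y - 1)


open MeasureTheory Polynomial

lemma asc_eval_mono {x y : ℝ} (hx : 0 < x) (hxy : x ≤ y) (n : ℕ) :
    (ascPochhammer ℝ n).eval x ≤ (ascPochhammer ℝ n).eval y := by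
  induction n with
  | zero => simp
  | succ n ih =>
    rw [ascPochhammer_succ_right]
    simp only [eval_mul, eval_add, eval_X, eval_natCast]
    have h1 : (0:ℝ) ≤ x + n := by positivity
    have h2 := ascPochhammer_pos n y (lt_of_lt_of_le hx hxy)
    exact mul_le_mul ih (by linarith) h1 h2.le

lemma Gamma_asc {x : ℝ} (hx : 0 < x) (n : ℕ) :
    Real.Gamma (x + n) = (ascPochhammer ℝ n).eval x * Real.Gamma x := by
  induction n with
  | zero => simp
  | succ n ih =>
    have hxn : x + (n:ℝ) ≠ 0 := by positivity
    have h : x + ((n+1 : ℕ):ℝ) = (x + n) + 1 := by push_cast; ring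
    rw [h, Real.Gamma_add_one hxn, ih, ascPochhammer_succ_right]
    simp only [eval_mul, eval_add, eval_X, eval_natCast]
    ring

lemma betaFn_eq {x y : ℝ} (hx : 0 < x) (hy : 0 < y) :
    betaFn x y = Real.Gamma x * Real.Gamma y / Real.Gamma (x + y) := by
  have key : ((betaFn x y : ℝ) : ℂ) = Complex.betaIntegral x y := by
    have h1 : Complex.betaIntegral x y
        = ∫ t in (0:ℝ)..1, ((t ^ (x-1) * (1-t) ^ (y-1) : ℝ) : ℂ) := by
      rw [Complex.betaIntegral]
      apply intervalIntegral.integral_congr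
      intro t ht
      rw [Set.uIcc_of_le zero_le_one] at ht
      obtain ⟨h0, h1⟩ := ht
      push_cast
      rw [Complex.ofReal_cpow h0, Complex.ofReal_cpow (by linarith : (0:ℝ) ≤ 1 - t)]
      push_cast
      ring
    rw [h1, betaFn]
    exact (RCLike.intervalIntegral_ofReal (𝕜 := ℂ)).symm
  have hG := Complex.Gamma_mul_Gamma_eq_betaIntegral
    (s := (x:ℂ)) (t := (y:ℂ)) (by simpa using hx) (by simpa using hy)
  rw [← key] at hG
  have : ((Real.Gamma x * Real.Gamma y : ℝ) : ℂ)
      = ((Real.Gamma (x + y) * betaFn x y : ℝ) : ℂ) := by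
    push_cast
    rw [← Complex.Gamma_ofReal, ← Complex.Gamma_ofReal, hG, ← Complex.ofReal_add,
      Complex.Gamma_ofReal]
  have h2 : Real.Gamma x * Real.Gamma y = Real.Gamma (x + y) * betaFn x y :=
    Complex.ofReal_injective this
  have h3 : Real.Gamma (x + y) ≠ 0 := (Real.Gamma_pos_of_pos (by linarith)).ne'
  rw [h2, mul_comm, mul_div_assoc, div_self h3, mul_one]

lemma integrableBeta {p s : ℝ} (hp : 0 < p) (hs : -1 < s) :
    IntervalIntegrable (fun κ : ℝ => κ ^ p * (1 - κ) ^ s) volume 0 1 := by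
  have h1 : IntervalIntegrable (fun κ : ℝ => (1 - κ) ^ s) volume 0 1 := by
    have := (intervalIntegral.intervalIntegrable_rpow' hs (a := 0) (b := 1)).comp_sub_left 1
    simpa using this.symm
  have hc : ContinuousOn (fun κ : ℝ => κ ^ p) (Set.uIcc 0 1) :=
    fun x _ => (Real.continuousAt_rpow_const x p (Or.inr hp.le)).continuousWithinAt
  exact h1.continuousOn_mul hc

lemma kummer_summable {a c w : ℝ} (hc : 0 < c) (K : ℝ) (hw : 0 ≤ w)
    (hK : ∀ i, |(ascPochhammer ℝ i).eval a| ≤ K * (ascPochhammer ℝ i).eval c) :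
    Summable (fun i : ℕ =>
      ((ascPochhammer ℝ i).eval a / (ascPochhammer ℝ i).eval c) * w ^ i / (Nat.factorial i)) := by
  apply Summable.of_norm_bounded ((Real.summable_pow_div_factorial w).mul_left K)
  intro i
  have hci := ascPochhammer_pos i c hc
  have hfi : (0:ℝ) < (Nat.factorial i : ℝ) := by positivity
  rw [Real.norm_eq_abs, abs_div, abs_mul, abs_div]
  rw [abs_of_pos hci, abs_of_nonneg (pow_nonneg hw i), abs_of_pos hfi]
  rw [div_le_iff₀ hfi, mul_comm K (w ^ i / _), div_mul_eq_mul_div, div_mul_eq_mul_div,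
    div_mul_eq_mul_div, div_le_div_iff₀ hci hfi]
  have := hK i
  have hwi : (0:ℝ) ≤ w ^ i := pow_nonneg hw i
  calc |(ascPochhammer ℝ i).eval a| * w ^ i * (Nat.factorial i : ℝ)
      ≤ K * (ascPochhammer ℝ i).eval c * w ^ i * (Nat.factorial i : ℝ) := by
        apply mul_le_mul_of_nonneg_right (mul_le_mul_of_nonneg_right this hwi) hfi.le
    _ = w ^ i * K * (Nat.factorial i : ℝ) * (ascPochhammer ℝ i).eval c := by ring


open MeasureTheory Polynomial in
lemma lhs_expand {b p w : ℝ} (hb0 : 0 < b) (hb1 : b < 1) (hp : 0 < p) (hw : 0 ≤ w) :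
    ∫ κ in (0:ℝ)..1, κ ^ p * (1 - κ) ^ (b - 1) * Real.exp (w * (1 - κ))
      = ∑' i : ℕ, (w ^ i / (Nat.factorial i)) * betaFn (p + 1) (b + i) := by
  set F : ℕ → ℝ → ℝ :=
    fun i κ => (w ^ i / (Nat.factorial i)) * (κ ^ p * (1 - κ) ^ (b - 1 + i)) with hF
  have hexp : ∀ i : ℕ, (-1:ℝ) < b - 1 + i := by
    intro i
    have : (0:ℝ) ≤ i := Nat.cast_nonneg i
    linarith
  have hexpne : ∀ i : ℕ, b - 1 + (i:ℝ) ≠ 0 := by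
    intro i
    rcases Nat.eq_zero_or_pos i with h | h
    · subst h; push_cast; intro hcon; linarith
    · have : (1:ℝ) ≤ i := by exact_mod_cast h
      intro hcon; linarith
  have hInt : ∀ i, IntervalIntegrable (F i) volume 0 1 := fun i =>
    (integrableBeta hp (hexp i)).const_mul _
  have hval : ∀ i, ∫ κ in (0:ℝ)..1, F i κ
      = (w ^ i / (Nat.factorial i)) * betaFn (p + 1) (b + i) := by
    intro i
    rw [hF, intervalIntegral.integral_const_mul, betaFn]
    congr 1
    have e1 : p + 1 - 1 = p := by ring
    have e2 : b + (i:ℝ) - 1 = b - 1 + i := by ring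
    rw [e1, e2]
  have hnonneg : ∀ i : ℕ, ∀ κ ∈ Set.Ioc (0:ℝ) 1, 0 ≤ F i κ := by
    intro i κ hκ
    have h1 : (0:ℝ) ≤ κ := hκ.1.le
    have h2 : (0:ℝ) ≤ 1 - κ := by linarith [hκ.2]
    have := Real.rpow_nonneg h1 p
    have := Real.rpow_nonneg h2 (b - 1 + i)
    positivity
  have hmono : ∀ i, ∫ κ in (0:ℝ)..1, F i κ ≤ (w ^ i / (Nat.factorial i)) * betaFn (p + 1) b := by
    intro i
    have e1 : p + 1 - 1 = p := by ring
    have hrhs : (w ^ i / (Nat.factorial i : ℝ)) * betaFn (p + 1) b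
        = ∫ κ in (0:ℝ)..1, (w ^ i / (Nat.factorial i)) * (κ ^ p * (1 - κ) ^ (b - 1)) := by
      rw [intervalIntegral.integral_const_mul, betaFn, e1]
    rw [hrhs]
    apply intervalIntegral.integral_mono_on zero_le_one (hInt i)
      ((integrableBeta hp (by linarith)).const_mul _)
    intro κ hκ
    have h1 : (0:ℝ) ≤ κ := hκ.1
    have h2 : (0:ℝ) ≤ 1 - κ := by linarith [hκ.2]
    rw [hF]
    apply mul_le_mul_of_nonneg_left _ (by positivity)
    apply mul_le_mul_of_nonneg_left _ (Real.rpow_nonneg h1 p)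
    rcases eq_or_lt_of_le h2 with h3 | h3
    · rw [← h3, Real.zero_rpow (hexpne i), Real.zero_rpow (by intro hcon; linarith)]
    · apply Real.rpow_le_rpow_of_exponent_ge h3 (by linarith [hκ.1])
      have : (0:ℝ) ≤ i := Nat.cast_nonneg i
      linarith
  have hFint : ∀ i, Integrable (F i) (volume.restrict (Set.Ioc (0:ℝ) 1)) := fun i =>
    (intervalIntegrable_iff_integrableOn_Ioc_of_le zero_le_one).mp (hInt i)
  have hμ : Summable (fun i : ℕ => ∫ κ in Set.Ioc (0:ℝ) 1, ‖F i κ‖) := by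
    apply Summable.of_nonneg_of_le (fun i => integral_nonneg (fun κ => norm_nonneg _))
      (fun i => ?_) ((Real.summable_pow_div_factorial w).mul_right (betaFn (p + 1) b))
    have heq : ∫ κ in Set.Ioc (0:ℝ) 1, ‖F i κ‖ = ∫ κ in Set.Ioc (0:ℝ) 1, F i κ := by
      apply setIntegral_congr_fun measurableSet_Ioc
      intro κ hκ
      exact Real.norm_of_nonneg (hnonneg i κ hκ)
    rw [heq, ← intervalIntegral.integral_of_le zero_le_one]
    exact hmono i
  have hpt : ∀ κ ∈ Set.Ioc (0:ℝ) 1,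
      κ ^ p * (1 - κ) ^ (b - 1) * Real.exp (w * (1 - κ)) = ∑' i : ℕ, F i κ := by
    intro κ hκ
    rcases eq_or_lt_of_le hκ.2 with h1 | h1
    · rw [h1]
      have hz : ∀ i : ℕ, F i 1 = 0 := by
        intro i
        simp only [hF]
        rw [sub_self, Real.zero_rpow (hexpne i)]
        ring
      rw [tsum_congr hz, tsum_zero, sub_self,
        Real.zero_rpow (show b - 1 ≠ 0 by intro hcon; linarith)]
      ring
    · have h2 : (0:ℝ) < 1 - κ := by linarith
      have hsplit : ∀ i : ℕ, F i κ
          = (κ ^ p * (1 - κ) ^ (b - 1)) * ((w * (1 - κ)) ^ i / (Nat.factorial i)) := by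
        intro i
        simp only [hF]
        rw [Real.rpow_add h2, Real.rpow_natCast, mul_pow]
        ring
      rw [tsum_congr hsplit, tsum_mul_left, Real.exp_eq_exp_ℝ, NormedSpace.exp_eq_tsum_div]
  calc ∫ κ in (0:ℝ)..1, κ ^ p * (1 - κ) ^ (b - 1) * Real.exp (w * (1 - κ))
      = ∫ κ in Set.Ioc (0:ℝ) 1, κ ^ p * (1 - κ) ^ (b - 1) * Real.exp (w * (1 - κ)) :=
        intervalIntegral.integral_of_le zero_le_one
    _ = ∫ κ in Set.Ioc (0:ℝ) 1, ∑' i : ℕ, F i κ := setIntegral_congr_fun measurableSet_Ioc hpt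
    _ = ∑' i : ℕ, ∫ κ in Set.Ioc (0:ℝ) 1, F i κ :=
        (integral_tsum_of_summable_integral_norm hFint hμ).symm
    _ = ∑' i : ℕ, (w ^ i / (Nat.factorial i)) * betaFn (p + 1) (b + i) := by
      apply tsum_congr
      intro i
      rw [← intervalIntegral.integral_of_le zero_le_one]
      exact hval i

open MeasureTheory Polynomial in
theorem integral_parts_kummer (b q j w : ℝ) (hb0 : 0 < b) (hb1 : b < 1)
    (hq : 0 < q) (hj : j = 0 ∨ j = 1) (hw : 0 ≤ w) :
    w * ∫ κ in (0:ℝ)..1, κ ^ (q + j) * (1 - κ) ^ (b - 1) * Real.exp (w * (1 - κ))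
      = (q + j) * betaFn (q + j) b *
        (kummerM b (b + q + j) w - kummerM (b - 1) (b + q + j) w) := by
  have hj0 : 0 ≤ j := by rcases hj with h | h <;> rw [h] <;> norm_num
  have hp : 0 < q + j := by linarith
  have hbq : b + q + j = b + (q + j) := by ring
  rw [hbq]
  set p := q + j with hpdef
  set c := b + p with hcdef
  have hc : 0 < c := by rw [hcdef]; linarith
  have hbc : b ≤ c := by rw [hcdef]; linarith
  have hu : Summable (fun i : ℕ =>
      ((ascPochhammer ℝ i).eval b / (ascPochhammer ℝ i).eval c) * w ^ i / (Nat.factorial i)) := by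
    apply kummer_summable hc 1 hw
    intro i
    rw [one_mul, abs_of_pos (ascPochhammer_pos i b hb0)]
    exact asc_eval_mono hb0 hbc i
  have hv : Summable (fun i : ℕ =>
      ((ascPochhammer ℝ i).eval (b - 1) / (ascPochhammer ℝ i).eval c) * w ^ i
        / (Nat.factorial i)) := by
    apply kummer_summable hc (max 1 c⁻¹) hw
    intro i
    cases i with
    | zero => simpa using le_max_left 1 c⁻¹
    | succ n =>
      rw [ascPochhammer_succ_left]
      simp only [eval_mul, eval_comp, eval_add, eval_X, eval_one]
      have hb11 : b - 1 + 1 = b := by ring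
      rw [hb11]
      have e1 : (ascPochhammer ℝ n).eval b ≤ (ascPochhammer ℝ n).eval (c + 1) :=
        asc_eval_mono hb0 (by linarith) n
      have e2 : 0 < (ascPochhammer ℝ n).eval (c + 1) := ascPochhammer_pos n _ (by linarith)
      have habs : |b - 1| ≤ 1 := by rw [abs_of_nonpos (by linarith)]; linarith
      calc |(b - 1) * (ascPochhammer ℝ n).eval b|
          = |b - 1| * (ascPochhammer ℝ n).eval b := by
            rw [abs_mul, abs_of_pos (ascPochhammer_pos n b hb0)]
        _ ≤ 1 * (ascPochhammer ℝ n).eval (c + 1) := by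
            apply mul_le_mul habs e1 (ascPochhammer_pos n b hb0).le zero_le_one
        _ ≤ max 1 c⁻¹ * (c * (ascPochhammer ℝ n).eval (c + 1)) := by
            rw [one_mul, ← mul_assoc]
            nth_rewrite 1 [← one_mul ((ascPochhammer ℝ n).eval (c + 1))]
            apply mul_le_mul_of_nonneg_right _ e2.le
            calc (1:ℝ) = c⁻¹ * c := (inv_mul_cancel₀ hc.ne').symm
              _ ≤ max 1 c⁻¹ * c := mul_le_mul_of_nonneg_right (le_max_right _ _) hc.le
  have hterm : ∀ i : ℕ,
      ((ascPochhammer ℝ i).eval b / (ascPochhammer ℝ i).eval c) * w ^ i / (Nat.factorial i)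
        - ((ascPochhammer ℝ i).eval (b - 1) / (ascPochhammer ℝ i).eval c) * w ^ i
          / (Nat.factorial i)
      = (((ascPochhammer ℝ i).eval b - (ascPochhammer ℝ i).eval (b - 1))
          / (ascPochhammer ℝ i).eval c) * w ^ i / (Nat.factorial i) := by
    intro i; ring
  have hd : Summable (fun i : ℕ =>
      (((ascPochhammer ℝ i).eval b - (ascPochhammer ℝ i).eval (b - 1))
        / (ascPochhammer ℝ i).eval c) * w ^ i / (Nat.factorial i)) :=
    (hu.sub hv).congr hterm
  have hdiff : kummerM b c w - kummerM (b - 1) c w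
      = ∑' k : ℕ, ((ascPochhammer ℝ k).eval b / (ascPochhammer ℝ (k + 1)).eval c) * w ^ (k + 1)
          / (Nat.factorial k) := by
    rw [kummerM, kummerM, ← Summable.tsum_sub hu hv, tsum_congr hterm, Summable.tsum_eq_zero_add hd]
    rw [show (((ascPochhammer ℝ 0).eval b - (ascPochhammer ℝ 0).eval (b - 1))
        / (ascPochhammer ℝ 0).eval c) * w ^ 0 / (Nat.factorial 0) = (0:ℝ) by simp, zero_add]
    apply tsum_congr
    intro k
    have hsr : (ascPochhammer ℝ (k + 1)).eval b = (ascPochhammer ℝ k).eval b * (b + k) := by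
      rw [ascPochhammer_succ_right]
      simp [eval_mul, eval_add]
    have hsl : (ascPochhammer ℝ (k + 1)).eval (b - 1)
        = (b - 1) * (ascPochhammer ℝ k).eval b := by
      rw [ascPochhammer_succ_left]
      simp only [eval_mul, eval_comp, eval_add, eval_X, eval_one]
      rw [show b - 1 + 1 = b by ring]
    rw [hsr, hsl, Nat.factorial_succ]
    have hck : (ascPochhammer ℝ (k + 1)).eval c ≠ 0 := (ascPochhammer_pos _ c hc).ne'
    have hfk : ((Nat.factorial k : ℝ)) ≠ 0 := by positivity
    have hk1 : ((k:ℝ) + 1) ≠ 0 := by positivity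
    push_cast
    field_simp
    ring
  rw [lhs_expand hb0 hb1 hp hw, hdiff, ← tsum_mul_left, ← tsum_mul_left]
  apply tsum_congr
  intro k
  have hbk : (0:ℝ) < b + k := by positivity
  rw [betaFn_eq (by linarith : (0:ℝ) < p + 1) hbk, betaFn_eq hp hb0]
  have hGb := Real.Gamma_pos_of_pos hb0
  have hGc := Real.Gamma_pos_of_pos hc
  have hGD := Real.Gamma_pos_of_pos (show (0:ℝ) < c + ((k + 1 : ℕ):ℝ) by positivity)
  have g1 : (ascPochhammer ℝ k).eval b = Real.Gamma (b + k) / Real.Gamma b := by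
    rw [Gamma_asc hb0 k]
    field_simp
  have g2 : (ascPochhammer ℝ (k + 1)).eval c
      = Real.Gamma (c + ((k + 1 : ℕ):ℝ)) / Real.Gamma c := by
    rw [Gamma_asc hc (k + 1)]
    field_simp
  rw [g1, g2]
  rw [show p + 1 + (b + (k:ℝ)) = c + ((k + 1 : ℕ):ℝ) by rw [hcdef]; push_cast; ring]
  rw [show p + b = c by rw [hcdef]; ring]
  rw [Real.Gamma_add_one hp.ne']
  have hGbk := Real.Gamma_pos_of_pos hbk
  have hfk : ((Nat.factorial k : ℝ)) ≠ 0 := by positivity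
  field_simp
  ring
end

section
/- For 0 < b < 1, q > 0, w ≥ 0, and any δ with (1−b)/(b+N−1) < δ < (1−b)/b for a positive integer N: if the truncated series f_N(w;δ) = (1+δ) + ((b−1+δb)/(b+q+1))w + Σ_{i=2}^{N} (b−1+δ(b+i−1)) · [b(b+1)···(b+i−2)]/[(b+q+1)···(b+q+i)] · wⁱ/i! is nonnegative, then M(b−1, b+q+1, w) + δ·M(b, b+q+1, w) ≥ 0, i.e., M(b−1,b+q+1,w)/M(b,b+q+1,w) ≥ −δ. -/
lemma poch_prod (n : ℕ) (x : ℝ) :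
    (ascPochhammer ℝ n).eval x = ∏ k ∈ Finset.range n, (x + k) := by
  induction n with
  | zero => simp
  | succ n ih => rw [ascPochhammer_succ_eval, ih, Finset.prod_range_succ]

lemma poch_succ_left_eval (n : ℕ) (x : ℝ) :
    (ascPochhammer ℝ (n+1)).eval x = x * (ascPochhammer ℝ n).eval (x+1) := by
  rw [poch_prod, poch_prod, Finset.prod_range_succ']
  simp only [Nat.cast_zero, add_zero, Nat.cast_add, Nat.cast_one]
  rw [mul_comm]
  congr 1
  exact Finset.prod_congr rfl (fun k _ => by ring)

lemma summable_kummer_aux (a c w : ℝ) (hc : 0 < c) (h : ∀ k : ℕ, |a + k| ≤ c + k) :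
    Summable (fun i : ℕ =>
      ((ascPochhammer ℝ i).eval a / (ascPochhammer ℝ i).eval c) * w ^ i / (Nat.factorial i)) := by
  rw [← summable_abs_iff]
  refine Summable.of_nonneg_of_le (fun i => abs_nonneg _) (fun i => ?_)
    (Real.summable_pow_div_factorial |w|)
  
  have hPc : 0 < (ascPochhammer ℝ i).eval c := ascPochhammer_pos i c hc
  have h1 : |(ascPochhammer ℝ i).eval a| ≤ (ascPochhammer ℝ i).eval c := by
    rw [poch_prod, poch_prod, Finset.abs_prod]
    apply Finset.prod_le_prod (fun k _ => abs_nonneg _) (fun k _ => h k)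
  have heq : |(ascPochhammer ℝ i).eval a / (ascPochhammer ℝ i).eval c * w ^ i /
      (Nat.factorial i)| = (|(ascPochhammer ℝ i).eval a| / (ascPochhammer ℝ i).eval c)
      * |w| ^ i / (Nat.factorial i) := by
    rw [abs_div, abs_mul, abs_div, abs_pow, abs_of_pos hPc, Nat.abs_cast]
  rw [heq]
  have h2 : |(ascPochhammer ℝ i).eval a| / (ascPochhammer ℝ i).eval c ≤ 1 :=
    div_le_one_of_le₀ h1 hPc.le
  calc |(ascPochhammer ℝ i).eval a| / (ascPochhammer ℝ i).eval c * |w| ^ i /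
      (Nat.factorial i) ≤ 1 * |w| ^ i / (Nat.factorial i) := by
        gcongr
    _ = |w| ^ i / (Nat.factorial i) := by ring

theorem truncation_suffices (b q w δ : ℝ) (N : ℕ) (hN : 0 < N)
    (hb0 : 0 < b) (hb1 : b < 1) (hq : 0 < q) (hw : 0 ≤ w)
    (hδl : (1 - b) / (b + N - 1) < δ) (hδu : δ < (1 - b) / b)
    (hf : 0 ≤ (1 + δ) + ((b - 1 + δ * b) / (b + q + 1)) * w +
      ∑ i ∈ Finset.Icc 2 N, (b - 1 + δ * (b + i - 1)) *
        ((ascPochhammer ℝ (i-1)).eval b / (ascPochhammer ℝ i).eval (b + q + 1)) *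
        w ^ i / (Nat.factorial i)) :
    0 ≤ kummerM (b - 1) (b + q + 1) w + δ * kummerM b (b + q + 1) w ∧
    kummerM (b - 1) (b + q + 1) w / kummerM b (b + q + 1) w ≥ -δ := by
  set c : ℝ := b + q + 1 with hc_def
  have hc1 : 1 < c := by simp [hc_def]; linarith
  have hc : 0 < c := by linarith
  have hN1 : (1 : ℝ) ≤ (N : ℝ) := by exact_mod_cast hN
  have hden : 0 < b + (N : ℝ) - 1 := by linarith
  have hδ0 : 0 < δ := lt_trans (div_pos (by linarith) hden) hδl
  have hδN : 1 - b < δ * (b + N - 1) := by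
    rw [div_lt_iff₀ hden] at hδl; linarith
  -- summability
  have S1 : Summable (fun i : ℕ =>
      ((ascPochhammer ℝ i).eval (b-1) / (ascPochhammer ℝ i).eval c) * w ^ i / (Nat.factorial i)) := by
    apply summable_kummer_aux _ _ _ hc
    intro k
    have hk : (0:ℝ) ≤ k := Nat.cast_nonneg k
    rw [abs_le]; constructor <;> linarith
  have S2 : Summable (fun i : ℕ =>
      ((ascPochhammer ℝ i).eval b / (ascPochhammer ℝ i).eval c) * w ^ i / (Nat.factorial i)) := by
    apply summable_kummer_aux _ _ _ hc
    intro k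
    have hk : (0:ℝ) ≤ k := Nat.cast_nonneg k
    rw [abs_le]; constructor <;> linarith
  set g : ℕ → ℝ := fun i =>
      ((ascPochhammer ℝ i).eval (b-1) / (ascPochhammer ℝ i).eval c) * w ^ i / (Nat.factorial i)
      + δ * (((ascPochhammer ℝ i).eval b / (ascPochhammer ℝ i).eval c) * w ^ i / (Nat.factorial i))
      with hg_def
  have Sg : Summable g := S1.add (S2.mul_left δ)
  -- the combined term identity for indices ≥ 1
  have gsucc : ∀ k : ℕ, g (k+1) = (b - 1 + δ * (b + (k:ℝ))) *
      ((ascPochhammer ℝ k).eval b / (ascPochhammer ℝ (k+1)).eval c) * w ^ (k+1)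
      / (Nat.factorial (k+1)) := by
    intro k
    have e1 : (ascPochhammer ℝ (k+1)).eval (b-1) = (b-1) * (ascPochhammer ℝ k).eval b := by
      rw [poch_succ_left_eval]; norm_num
    have e2 : (ascPochhammer ℝ (k+1)).eval b = (ascPochhammer ℝ k).eval b * (b + k) := by
      rw [ascPochhammer_succ_eval]
    rw [hg_def]
    simp only [e1, e2]
    ring
  -- key: LHS as a single tsum
  have key : kummerM (b - 1) c w + δ * kummerM b c w = ∑' i, g i := by
    simp only [kummerM]
    rw [← tsum_mul_left, ← S1.tsum_add (S2.mul_left δ)]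
  have split := (Sg.sum_add_tsum_nat_add (N+1)).symm
  -- tail nonneg
  have tail : 0 ≤ ∑' i : ℕ, g (i + (N+1)) := by
    apply tsum_nonneg
    intro i
    have : i + (N+1) = (i + N) + 1 := by ring
    rw [this, gsucc]
    have hcoef : 0 ≤ b - 1 + δ * (b + ((i+N:ℕ):ℝ)) := by
      have : (N:ℝ) ≤ ((i+N:ℕ):ℝ) := by push_cast; linarith [Nat.cast_nonneg (α := ℝ) i]
      nlinarith
    have hpb : 0 < (ascPochhammer ℝ (i+N)).eval b := ascPochhammer_pos _ _ hb0
    have hpc : 0 < (ascPochhammer ℝ (i+N+1)).eval c := ascPochhammer_pos _ _ hc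
    positivity
  -- head equals the hf expression
  have head : ∑ i ∈ Finset.range (N+1), g i =
      (1 + δ) + ((b - 1 + δ * b) / c) * w +
      ∑ i ∈ Finset.Icc 2 N, (b - 1 + δ * (b + i - 1)) *
        ((ascPochhammer ℝ (i-1)).eval b / (ascPochhammer ℝ i).eval c) *
        w ^ i / (Nat.factorial i) := by
    rw [Finset.range_eq_Ico, ← Finset.sum_Ico_consecutive g (by norm_num : 0 ≤ 2)
      (by omega : 2 ≤ N + 1)]
    have h02 : ∑ i ∈ Finset.Ico 0 2, g i = (1 + δ) + ((b - 1 + δ * b) / c) * w := by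
      have : Finset.Ico 0 2 = Finset.range 2 := by rw [Finset.range_eq_Ico]
      rw [this, Finset.sum_range_succ, Finset.sum_range_one, hg_def]
      simp [ascPochhammer_one]
      ring
    have h2N : ∑ i ∈ Finset.Ico 2 (N+1), g i =
        ∑ i ∈ Finset.Icc 2 N, (b - 1 + δ * (b + i - 1)) *
        ((ascPochhammer ℝ (i-1)).eval b / (ascPochhammer ℝ i).eval c) *
        w ^ i / (Nat.factorial i) := by
      rw [Finset.Ico_add_one_right_eq_Icc]
      apply Finset.sum_congr rfl
      intro i hi
      obtain ⟨hi2, _⟩ := Finset.mem_Icc.mp hi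
      obtain ⟨k, rfl⟩ : ∃ k, i = k + 1 := ⟨i - 1, by omega⟩
      simp only [Nat.add_sub_cancel]
      rw [gsucc]
      push_cast
      ring
    rw [h02, h2N]
  have part1 : 0 ≤ kummerM (b - 1) c w + δ * kummerM b c w := by
    rw [key, split, head]
    linarith
  refine ⟨part1, ?_⟩
  -- kummerM b c w ≥ 1 > 0
  have hM : 0 < kummerM b c w := by
    have h1le : (fun i : ℕ => ((ascPochhammer ℝ i).eval b / (ascPochhammer ℝ i).eval c)
        * w ^ i / (Nat.factorial i)) 0 ≤ kummerM b c w := by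
      apply S2.le_tsum 0
      intro j _
      have hpb : 0 < (ascPochhammer ℝ j).eval b := ascPochhammer_pos _ _ hb0
      have hpc : 0 < (ascPochhammer ℝ j).eval c := ascPochhammer_pos _ _ hc
      positivity
    simp at h1le
    linarith
  rw [ge_iff_le, neg_le, ← neg_div, div_le_iff₀ hM]
  linarith
end

section
/- For 0 < b < 1, q = p/2 + a with p/2 + a > 0, p ≥ 3, and a ≤ p/2 − 2: whenever M(b−1, b+q+1, w) ≥ −((1−b)/(b+2))·M(b, b+q+1, w) holds, the quantity Δ(w) = p/2 − a − 2 + 2(q+1)·M(b−1,b+q+1,w)/M(b,b+q+1,w) − q·M(b−1,b+q,w)/M(b,b+q,w) satisfies Δ(w) ≥ (b(3p+2a) − (8a+12))/(2(b+2)) on the set where M(b−1, b+q, w) < 0. -/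
lemma ascPochhammer_le_of_le {a c : ℝ} (ha : 0 < a) (hac : a ≤ c) (n : ℕ) :
    (ascPochhammer ℝ n).eval a ≤ (ascPochhammer ℝ n).eval c := by
  induction n with
  | zero => simp
  | succ n ih =>
    rw [ascPochhammer_succ_eval, ascPochhammer_succ_eval]
    have h1 : 0 < (ascPochhammer ℝ n).eval a := ascPochhammer_pos n a ha
    have h2 : (0:ℝ) < a + n := by positivity
    nlinarith

lemma kummerM_pos {a c w : ℝ} (ha : 0 < a) (hac : a ≤ c) (hw : 0 ≤ w) :
    0 < kummerM a c w := by
  have hc : 0 < c := lt_of_lt_of_le ha hac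
  set f : ℕ → ℝ := fun i =>
    ((ascPochhammer ℝ i).eval a / (ascPochhammer ℝ i).eval c) * w ^ i / (Nat.factorial i)
  have hnn : ∀ i, 0 ≤ f i := fun i => by
    have := ascPochhammer_pos i a ha
    have := ascPochhammer_pos i c hc
    positivity
  have hle : ∀ i, f i ≤ w ^ i / (Nat.factorial i) := fun i => by
    have hpa := ascPochhammer_pos i a ha
    have hpc := ascPochhammer_pos i c hc
    have hr : (ascPochhammer ℝ i).eval a / (ascPochhammer ℝ i).eval c ≤ 1 :=
      (div_le_one hpc).2 (ascPochhammer_le_of_le ha hac i)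
    have : ((ascPochhammer ℝ i).eval a / (ascPochhammer ℝ i).eval c) * w ^ i ≤ 1 * w ^ i :=
      mul_le_mul_of_nonneg_right hr (by positivity)
    have hfac : (0:ℝ) < (Nat.factorial i : ℝ) := by positivity
    calc f i ≤ 1 * w ^ i / (Nat.factorial i) := by
          exact div_le_div_of_nonneg_right this hfac.le |>.trans_eq rfl
      _ = w ^ i / (Nat.factorial i) := by ring
  have hsum : Summable f :=
    Summable.of_nonneg_of_le hnn hle (Real.summable_pow_div_factorial w)
  have h0 : f 0 = 1 := by simp [f]
  have := Summable.le_tsum hsum 0 (fun j _ => hnn j)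
  rw [h0] at this
  unfold kummerM
  linarith

theorem Delta_lower_bound (p : ℕ) (a b w : ℝ) (hp : 3 ≤ p)
    (hb0 : 0 < b) (hb1 : b < 1) (hq : 0 < (p:ℝ)/2 + a) (ha : a ≤ (p:ℝ)/2 - 2)
    (hw : 0 ≤ w)
    (hratio : kummerM (b - 1) (b + ((p:ℝ)/2 + a) + 1) w ≥
      -((1 - b) / (b + 2)) * kummerM b (b + ((p:ℝ)/2 + a) + 1) w)
    (hneg : kummerM (b - 1) (b + ((p:ℝ)/2 + a)) w < 0) :
    (p:ℝ)/2 - a - 2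
      + 2 * (((p:ℝ)/2 + a) + 1) *
        (kummerM (b - 1) (b + ((p:ℝ)/2 + a) + 1) w / kummerM b (b + ((p:ℝ)/2 + a) + 1) w)
      - ((p:ℝ)/2 + a) *
        (kummerM (b - 1) (b + ((p:ℝ)/2 + a)) w / kummerM b (b + ((p:ℝ)/2 + a)) w)
    ≥ (b * (3*(p:ℝ) + 2*a) - (8*a + 12)) / (2 * (b + 2)) := by
  set q : ℝ := (p:ℝ)/2 + a with hqdef
  have hN1 : 0 < kummerM b (b + q + 1) w :=
    kummerM_pos hb0 (by linarith) hw
  have hN0 : 0 < kummerM b (b + q) w :=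
    kummerM_pos hb0 (by linarith) hw
  have hb2 : (0:ℝ) < b + 2 := by linarith
  -- ratio bound for the middle term
  have hr1 : kummerM (b - 1) (b + q + 1) w / kummerM b (b + q + 1) w ≥ -((1 - b) / (b + 2)) := by
    rw [ge_iff_le, le_div_iff₀ hN1]
    exact hratio
  -- last term nonnegative
  have hr0 : kummerM (b - 1) (b + q) w / kummerM b (b + q) w < 0 :=
    div_neg_of_neg_of_pos hneg hN0
  have hkey : (p:ℝ)/2 - a - 2 + 2 * (q + 1) * (-((1 - b) / (b + 2)))
      = (b * (3*(p:ℝ) + 2*a) - (8*a + 12)) / (2 * (b + 2)) := by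
    field_simp
    ring
  have h2 : 2 * (q + 1) * (kummerM (b - 1) (b + q + 1) w / kummerM b (b + q + 1) w)
      ≥ 2 * (q + 1) * (-((1 - b) / (b + 2))) := by
    apply mul_le_mul_of_nonneg_left hr1 (by linarith)
  nlinarith [mul_nonneg (le_of_lt hq) (neg_nonneg.2 (le_of_lt hr0))]
end
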